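/- Let (A, B) be a suitable pair of sequences of positive integers, A = (a_1, …, a_p), B = (b_1, …, b_p), with compound sequence CS = C(A,B) = (n_0, …, n_p). Then CS is a telescopic sequence, and c(CS) = (a_1, a_2, …, a_p); that is, setting d_i = gcd(n_0, …, n_i), one has d_{i−1}/d_i = a_i and a_i · n_i ∈ ⟨n_0, …, n_{i−1}⟩ for all i = 1, …, p. -/

import Mathlib

/-- The monoid `⟨t_0, …, t_{n-1}⟩` of all nonnegative integer linear combinations of
the first `n` terms of the sequence `t`. -/
def genBy (t : ℕ → ℕ) (n : ℕ) : Set ℕ :=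
  {s | ∃ x : ℕ → ℕ, s = ∑ i ∈ Finset.range n, x i * t i}

/-- `d_i = gcd(t_0, …, t_i)`. -/
def seqD (t : ℕ → ℕ) (i : ℕ) : ℕ := Finset.gcd (Finset.range (i + 1)) t

/-- `c_j = d_{j-1} / d_j` (for `j ≥ 1`). -/
def seqC (t : ℕ → ℕ) (j : ℕ) : ℕ := seqD t (j - 1) / seqD t j

/-- The sequence `(t_0, …, t_k)` of positive integers is telescopic if
`c_j · t_j ∈ ⟨t_0, …, t_{j-1}⟩` for every `j = 1, …, k`. -/
def IsTelescopic (t : ℕ → ℕ) (k : ℕ) : Prop :=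
  (∀ i ≤ k, 0 < t i) ∧ ∀ j, 1 ≤ j → j ≤ k → seqC t j * t j ∈ genBy t j

/-- `(A, B)` (with terms indexed `1, …, p`) is a suitable pair of sequences of positive
integers: `gcd (A i) (B j) = 1` for all `j ≤ i`. -/
def IsSuitablePair (A B : ℕ → ℕ) (p : ℕ) : Prop :=
  (∀ i, 1 ≤ i → i ≤ p → 0 < A i ∧ 0 < B i) ∧
    ∀ i j, 1 ≤ j → j ≤ i → i ≤ p → Nat.gcd (A i) (B j) = 1

/-- The compound sequence `C(A,B) = (n_0, …, n_p)`: `n_i = b_1 ⋯ b_i · a_{i+1} ⋯ a_p`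
(equivalently `n_0 = a_1 ⋯ a_p` and `n_i = n_{i-1} b_i / a_i`). -/
def compoundSeq (A B : ℕ → ℕ) (p : ℕ) (i : ℕ) : ℕ :=
  (∏ j ∈ Finset.Icc 1 i, B j) * ∏ j ∈ Finset.Icc (i + 1) p, A j

/-- A compound sequence `C(A,B) = (n_0, …, n_p)` of a suitable pair is telescopic with
`c(C(A,B)) = (a_1, …, a_p)`: that is, `d_{i-1}/d_i = a_i` and
`a_i · n_i ∈ ⟨n_0, …, n_{i-1}⟩` for all `i = 1, …, p`. -/
lemma D_succ (A : ℕ → ℕ) (p i : ℕ) (h : i + 1 ≤ p) :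
    (∏ j ∈ Finset.Icc (i+1) p, A j) = A (i+1) * ∏ j ∈ Finset.Icc (i+2) p, A j := by
  have : Finset.Icc (i+1) p = insert (i+1) (Finset.Icc (i+2) p) := by
    rw [(show Finset.Icc (i+2) p = Finset.Ioc (i+1) p from Finset.Icc_add_one_left_eq_Ioc (i+1) p), Finset.Ioc_insert_left h]
  rw [this, Finset.prod_insert (by simp)]

theorem compound_is_telescopic (A B : ℕ → ℕ) (p : ℕ)
    (hsuit : IsSuitablePair A B p) :
    IsTelescopic (compoundSeq A B p) p ∧
      ∀ i, 1 ≤ i → i ≤ p →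
        seqD (compoundSeq A B p) (i - 1) / seqD (compoundSeq A B p) i = A i ∧
        A i * compoundSeq A B p i ∈ genBy (compoundSeq A B p) i := by
  obtain ⟨hpos, hcop⟩ := hsuit
  have hApos : ∀ i, 1 ≤ i → i ≤ p → 0 < A i := fun i h1 h2 => (hpos i h1 h2).1
  have hBpos : ∀ i, 1 ≤ i → i ≤ p → 0 < B i := fun i h1 h2 => (hpos i h1 h2).2
  have hDpos : ∀ i, 0 < ∏ j ∈ Finset.Icc (i+1) p, A j := by
    intro i
    apply Finset.prod_pos
    intro j hj
    simp only [Finset.mem_Icc] at hj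
    exact hApos j (le_trans (Nat.le_add_left 1 i) hj.1) hj.2
  have hnpos : ∀ i ≤ p, 0 < compoundSeq A B p i := by
    intro i hi
    unfold compoundSeq
    refine Nat.mul_pos ?_ (hDpos i)
    apply Finset.prod_pos
    intro j hj
    simp only [Finset.mem_Icc] at hj
    exact hBpos j hj.1 (hj.2.trans hi)
  -- seqD computation
  have hD : ∀ i ≤ p, seqD (compoundSeq A B p) i = ∏ j ∈ Finset.Icc (i+1) p, A j := by
    intro i
    induction i with
    | zero =>
      intro _
      simp [seqD, compoundSeq]
    | succ n ih =>
      intro h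
      have hn := ih (Nat.le_of_succ_le h)
      have hstep : seqD (compoundSeq A B p) (n+1)
          = Nat.gcd (compoundSeq A B p (n+1)) (seqD (compoundSeq A B p) n) := by
        rw [seqD, seqD, Finset.range_add_one, Finset.gcd_insert]
        rfl
      rw [hstep, hn, D_succ A p n h]
      have hcopr : Nat.Coprime (A (n+1)) (∏ j ∈ Finset.Icc 1 (n+1), B j) := by
        apply Nat.Coprime.prod_right
        intro j hj
        simp only [Finset.mem_Icc] at hj
        exact hcop (n+1) j hj.1 hj.2 h
      show Nat.gcd ((∏ j ∈ Finset.Icc 1 (n+1), B j) * ∏ j ∈ Finset.Icc (n+2) p, A j)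
          (A (n+1) * ∏ j ∈ Finset.Icc (n+2) p, A j) = _
      rw [Nat.gcd_mul_right, Nat.Coprime.gcd_eq_one hcopr.symm, one_mul]
  -- key identity: a_i * n_i = b_i * n_{i-1}
  have hkey : ∀ i, 1 ≤ i → i ≤ p →
      A i * compoundSeq A B p i = B i * compoundSeq A B p (i-1) := by
    intro i h1 h2
    obtain ⟨j, rfl⟩ : ∃ j, i = j + 1 := ⟨i - 1, (Nat.succ_pred_eq_of_pos h1).symm⟩
    simp only [Nat.add_sub_cancel]
    unfold compoundSeq
    rw [D_succ A p j h2, Finset.prod_Icc_succ_top (Nat.le_add_left 1 j)]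
    ring
  have hmem : ∀ i, 1 ≤ i → i ≤ p →
      A i * compoundSeq A B p i ∈ genBy (compoundSeq A B p) i := by
    intro i h1 h2
    refine ⟨fun k => if k = i - 1 then B i else 0, ?_⟩
    rw [hkey i h1 h2]
    rw [Finset.sum_eq_single (i-1)]
    · simp
    · intro b _ hb; simp [hb]
    · intro hmem'
      exact absurd (Finset.mem_range.mpr (Nat.sub_lt h1 Nat.one_pos)) hmem'
  have hdiv : ∀ i, 1 ≤ i → i ≤ p →
      seqD (compoundSeq A B p) (i - 1) / seqD (compoundSeq A B p) i = A i := by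
    intro i h1 h2
    obtain ⟨j, rfl⟩ : ∃ j, i = j + 1 := ⟨i - 1, (Nat.succ_pred_eq_of_pos h1).symm⟩
    simp only [Nat.add_sub_cancel]
    rw [hD j (le_trans (Nat.le_succ j) h2), hD (j+1) h2, D_succ A p j h2,
      Nat.mul_div_cancel _ (hDpos (j+1))]
  refine ⟨⟨fun i hi => hnpos i hi, ?_⟩, fun i h1 h2 => ⟨hdiv i h1 h2, hmem i h1 h2⟩⟩
  intro j h1 h2
  have : seqC (compoundSeq A B p) j = A j := hdiv j h1 h2
  rw [this]
  exact hmem j h1 h2
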